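/- Fix coprime integers 0 < q_1 < q_2 with q_1 odd and q_2 even. For each p, let N⁺(p) be the number of pairs (r,s) of nonnegative integers with r + s ≤ p, p | (r q_1 + s q_2), l := (r q_1 + s q_2)/p > 0, and gcd(r, s, l) odd, and let N(p) be the total number of such pairs with l > 0. Then N⁺(p)/N(p) → (3 q_1 (q_2 - q_1) + 1)/(4 q_1 (q_2 - q_1)) as p → ∞. -/

import Mathlib

open Finset Filter


def lineSet (q₁ q₂ p n l : ℕ) : Finset (ℕ × ℕ) :=
  (Finset.range (n+1) ×ˢ Finset.range (n+1)).filter fun rs =>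
    rs.1 + rs.2 ≤ n ∧ rs.1 * q₁ + rs.2 * q₂ = l * p

def Tset (q₁ q₂ p n : ℕ) : Finset (ℕ × ℕ) :=
  (Finset.range (n+1) ×ˢ Finset.range (n+1)).filter fun rs =>
    rs.1 + rs.2 ≤ n ∧ 0 < rs.1 * q₁ + rs.2 * q₂ ∧ p ∣ rs.1 * q₁ + rs.2 * q₂

lemma Tset_card_eq_sum (q₁ q₂ : ℕ) (hq : q₁ ≤ q₂) (p n : ℕ) (hp : 0 < p) (hn : n ≤ p) :
    (Tset q₁ q₂ p n).card = ∑ l ∈ Icc 1 q₂, (lineSet q₁ q₂ p n l).card := by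
  classical
  have hset : Tset q₁ q₂ p n = (Icc 1 q₂).biUnion (fun l => lineSet q₁ q₂ p n l) := by
    ext ⟨r, s⟩
    simp only [Tset, lineSet, mem_filter, mem_biUnion, mem_Icc, mem_product, mem_range]
    constructor
    · rintro ⟨⟨hr, hs⟩, hsum, hpos, l, hl⟩
      have hl1 : 1 ≤ l := by
        rcases Nat.eq_zero_or_pos l with h | h
        · rw [h, mul_zero] at hl; omega
        · exact h
      have hb1 : r * q₁ ≤ r * q₂ := Nat.mul_le_mul_left r hq
      have hb2 : (r + s) * q₂ ≤ n * q₂ := Nat.mul_le_mul_right q₂ hsum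
      have hb3 : n * q₂ ≤ p * q₂ := Nat.mul_le_mul_right q₂ hn
      have hb4 : p * l ≤ p * q₂ := by
        calc p * l = r * q₁ + s * q₂ := hl.symm
        _ ≤ (r + s) * q₂ := by rw [add_mul]; omega
        _ ≤ p * q₂ := le_trans hb2 hb3
      have hl2 : l ≤ q₂ := Nat.le_of_mul_le_mul_left hb4 hp
      exact ⟨l, ⟨hl1, hl2⟩, ⟨hr, hs⟩, hsum, by rw [hl, mul_comm]⟩
    · rintro ⟨l, ⟨hl1, hl2⟩, ⟨hr, hs⟩, hsum, heq⟩
      refine ⟨⟨hr, hs⟩, hsum, ?_, ⟨l, by rw [heq, mul_comm]⟩⟩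
      rw [heq]; exact Nat.mul_le_mul hl1 hp
  rw [hset]
  refine Finset.card_biUnion ?_
  intro x hx y hy hxy
  simp only [Finset.disjoint_left]
  intro ⟨r, s⟩ hmx hmy
  simp only [lineSet, mem_filter] at hmx hmy
  have : x * p = y * p := hmx.2.2 ▸ hmy.2.2
  exact hxy (Nat.eq_of_mul_eq_mul_right hp this)

lemma lineSet_empty (q₁ q₂ p n l : ℕ) (hq : q₁ ≤ q₂) (hl : n * q₂ < l * p) :
    lineSet q₁ q₂ p n l = ∅ := by
  ext ⟨r, s⟩
  simp only [lineSet, mem_filter, mem_product, mem_range, Finset.notMem_empty, iff_false]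
  rintro ⟨⟨hr, hs⟩, hsum, heq⟩
  have hb1 : r * q₁ ≤ r * q₂ := Nat.mul_le_mul_left r hq
  have hb2 : (r + s) * q₂ ≤ n * q₂ := Nat.mul_le_mul_right q₂ hsum
  rw [add_mul] at hb2
  omega

lemma lineSet_card_eq (q₁ q₂ : ℕ) (hq₁ : 0 < q₁) (hq : q₁ < q₂) (q₁' : ℕ)
    (hinv : q₁ * q₁' % q₂ = 1 % q₂)
    (p n l : ℕ) (hl : l * p ≤ n * q₂) :
    (lineSet q₁ q₂ p n l).card =
      ((Finset.range (min (l*p / q₁) ((n*q₂ - l*p)/(q₂ - q₁)) + 1)).filter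
        fun r => r % q₂ = (l*p*q₁') % q₂).card := by
  have hq₂ : 0 < q₂ := lt_trans hq₁ hq
  have hb : 0 < q₂ - q₁ := by omega
  have hmod : q₁ * q₁' ≡ 1 [MOD q₂] := hinv
  refine Finset.card_bij' (fun rs _ => rs.1) (fun r _ => (r, (l*p - r*q₁)/q₂)) ?_ ?_ ?_ ?_
  · rintro ⟨r, s⟩ hm
    simp only [lineSet, mem_filter, mem_product, mem_range] at hm
    obtain ⟨⟨hr, hs⟩, hsum, heq⟩ := hm
    simp only [mem_filter, mem_range, Nat.lt_succ_iff, le_min_iff]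
    have h1 : r ≤ l * p / q₁ := by
      rw [Nat.le_div_iff_mul_le hq₁]; omega
    have hE : r * (q₂ - q₁) + r * q₁ = r * q₂ := by
      rw [← Nat.mul_add]; congr 1; omega
    have hb2 : (r + s) * q₂ ≤ n * q₂ := Nat.mul_le_mul_right q₂ hsum
    rw [add_mul] at hb2
    have h2 : r ≤ (n*q₂ - l*p)/(q₂ - q₁) := by
      rw [Nat.le_div_iff_mul_le hb]; omega
    refine ⟨⟨h1, h2⟩, ?_⟩
    -- r ≡ l*p*q₁' [MOD q₂]
    have e1 : r * q₁ ≡ l * p [MOD q₂] := by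
      show r * q₁ % q₂ = l * p % q₂
      rw [← heq]; exact (Nat.add_mul_mod_self_right _ _ _).symm
    calc r = r * 1 := (mul_one r).symm
    _ ≡ r * (q₁ * q₁') [MOD q₂] := (hmod.mul_left r).symm
    _ = (r * q₁) * q₁' := by ring
    _ ≡ (l * p) * q₁' [MOD q₂] := e1.mul_right q₁'
  · intro r hm
    simp only [mem_filter, mem_range, Nat.lt_succ_iff, le_min_iff] at hm
    obtain ⟨⟨h1, h2⟩, hres⟩ := hm
    have hres' : r ≡ l * p * q₁' [MOD q₂] := hres
    have e1 : r * q₁ ≡ l * p [MOD q₂] := by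
      calc r * q₁ ≡ (l * p * q₁') * q₁ [MOD q₂] := hres'.mul_right q₁
      _ = (l*p) * (q₁ * q₁') := by ring
      _ ≡ (l*p) * 1 [MOD q₂] := hmod.mul_left (l*p)
      _ = l * p := mul_one _
    have hrq : r * q₁ ≤ l * p := by
      have := (Nat.le_div_iff_mul_le hq₁).mp h1; omega
    have hdvd : q₂ ∣ l * p - r * q₁ := (Nat.modEq_iff_dvd' hrq).mp e1
    have hs : (l*p - r*q₁)/q₂ * q₂ = l*p - r*q₁ := Nat.div_mul_cancel hdvd
    set s := (l*p - r*q₁)/q₂ with hsdef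
    have hm1 : l*p - r*q₁ + r*q₁ = l*p := Nat.sub_add_cancel hrq
    have hm2 : n*q₂ - l*p + l*p = n*q₂ := Nat.sub_add_cancel hl
    have heq : r * q₁ + s * q₂ = l * p := by omega
    have hE : r * (q₂ - q₁) + r * q₁ = r * q₂ := by
      rw [← Nat.mul_add]; congr 1; omega
    have h2' : r * (q₂ - q₁) ≤ n*q₂ - l*p := (Nat.le_div_iff_mul_le hb).mp h2
    have hCB : (r + s) * q₂ = r * q₂ + s * q₂ := add_mul r s q₂
    have hsumq : (r + s) * q₂ ≤ n * q₂ := by omega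
    have hsum : r + s ≤ n := Nat.le_of_mul_le_mul_right hsumq hq₂
    have hrn : r ≤ n := le_trans (Nat.le_add_right r s) hsum
    have hsn : s ≤ n := le_trans (Nat.le_add_left s r) hsum
    simp only [lineSet, mem_filter, mem_product, mem_range, Nat.lt_succ_iff]
    exact ⟨⟨hrn, hsn⟩, hsum, heq⟩
  · rintro ⟨r, s⟩ hm
    simp only [lineSet, mem_filter, mem_product, mem_range] at hm
    obtain ⟨⟨hr, hs⟩, hsum, heq⟩ := hm
    have : l * p - r * q₁ = s * q₂ := by omega
    simp only [this, Nat.mul_div_cancel _ (lt_trans hq₁ hq)]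
  · intro r hm
    rfl

lemma card_residue_eq (U q c : ℕ) (hq : 0 < q) (hc : c < q) (hcU : c ≤ U) :
    ((Finset.range (U+1)).filter fun r => r % q = c).card = (U - c)/q + 1 := by
  have himg : (Finset.range (U+1)).filter (fun r => r % q = c) =
      (Finset.range ((U - c)/q + 1)).image (fun k => c + q * k) := by
    ext r
    simp only [mem_filter, mem_range, mem_image, Nat.lt_succ_iff]
    constructor
    · rintro ⟨hrU, hrc⟩
      have hdm := Nat.div_add_mod r q
      refine ⟨r / q, ?_, by omega⟩
      rw [Nat.le_div_iff_mul_le hq]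
      have hcm : (r/q)*q = q*(r/q) := Nat.mul_comm _ _
      omega
    · rintro ⟨k, hk, rfl⟩
      have hk' := (Nat.le_div_iff_mul_le hq).mp hk
      have hcm : k*q = q*k := Nat.mul_comm _ _
      refine ⟨by omega, ?_⟩
      rw [Nat.add_mul_mod_self_left, Nat.mod_eq_of_lt hc]
  rw [himg, Finset.card_image_of_injective _
    (fun a b h => Nat.eq_of_mul_eq_mul_left hq (by omega)), Finset.card_range]

lemma card_residue_bound (U q c : ℕ) (hq : 0 < q) (hc : c < q) :
    |(((Finset.range (U+1)).filter fun r => r % q = c).card : ℝ) - U / q| ≤ 1 := by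
  have hq' : (0:ℝ) < q := by exact_mod_cast hq
  have hU0 : (0:ℝ) ≤ U := Nat.cast_nonneg U
  rcases le_or_gt c U with hcU | hcU
  · rw [card_residue_eq U q c hq hc hcU]
    have hdm := Nat.div_add_mod (U - c) q
    have hmod := Nat.mod_lt (U - c) hq
    have hsub : U - c + c = U := Nat.sub_add_cancel hcU
    set d := (U - c)/q with hd
    have hA : q * d ≤ U := by omega
    have hB : U + 2 ≤ q * d + 2 * q := by omega
    have l1 : (d:ℝ) ≤ U/q := by
      rw [le_div_iff₀ hq']
      have : (q:ℝ) * d ≤ U := by exact_mod_cast hA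
      linarith
    have l2 : (U:ℝ)/q ≤ d+2 := by
      rw [div_le_iff₀ hq']
      have : (U:ℝ) + 2 ≤ q*d + 2*q := by exact_mod_cast hB
      nlinarith
    rw [abs_le]; push_cast; constructor <;> linarith
  · have hempty : (Finset.range (U+1)).filter (fun r => r % q = c) = ∅ := by
      ext r
      simp only [mem_filter, mem_range, Nat.lt_succ_iff, Finset.notMem_empty, iff_false]
      rintro ⟨hrU, hrc⟩
      have := Nat.mod_le r q
      omega
    rw [hempty]
    simp only [Finset.card_empty, Nat.cast_zero, zero_sub, abs_neg]
    rw [abs_of_nonneg (by positivity)]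
    rw [div_le_one hq']
    have : (U:ℝ) < c := by exact_mod_cast hcU
    have : (c:ℝ) < q := by exact_mod_cast hc
    linarith

lemma ndiv_le (x q : ℕ) (hq : 0 < q) :
    ((x/q : ℕ):ℝ) ≤ (x:ℝ)/q ∧ (x:ℝ)/q ≤ ((x/q:ℕ):ℝ) + 1 := by
  have hq' : (0:ℝ) < q := by exact_mod_cast hq
  constructor
  · exact Nat.cast_div_le
  · rw [div_le_iff₀ hq']
    have hdm := Nat.div_add_mod x q
    have hmod := Nat.mod_lt x hq
    have h : x < (x/q + 1) * q := by
      have : (x/q+1)*q = q*(x/q) + q := by ring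
      omega
    have : (x:ℝ) < ((x/q:ℕ) + 1) * q := by exact_mod_cast h
    linarith

lemma line_bound (q₁ q₂ : ℕ) (hq₁ : 0 < q₁) (hq : q₁ < q₂) (q₁' : ℕ)
    (hinv : q₁ * q₁' % q₂ = 1 % q₂) (p n l : ℕ) (hl : l * p ≤ n * q₂) :
    |((lineSet q₁ q₂ p n l).card : ℝ) -
      min (((l*p:ℕ):ℝ)/q₁) ((((n*q₂:ℕ):ℝ) - ((l*p:ℕ):ℝ))/((q₂:ℝ)-q₁)) / q₂| ≤ 2 := by
  have hq₂ : 0 < q₂ := lt_trans hq₁ hq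
  have hb : 0 < q₂ - q₁ := by omega
  have hq₂' : (0:ℝ) < q₂ := by exact_mod_cast hq₂
  have hbcast : ((q₂ - q₁:ℕ):ℝ) = (q₂:ℝ) - q₁ := by
    push_cast [Nat.cast_sub (le_of_lt hq)]; ring
  rw [lineSet_card_eq q₁ q₂ hq₁ hq q₁' hinv p n l hl]
  set U := min (l*p / q₁) ((n*q₂ - l*p)/(q₂ - q₁)) with hU
  have h1 := card_residue_bound U q₂ ((l*p*q₁')%q₂) hq₂ (Nat.mod_lt _ hq₂)
  have d1 := ndiv_le (l*p) q₁ hq₁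
  have d2 := ndiv_le (n*q₂ - l*p) (q₂-q₁) hb
  have hsub : ((n*q₂ - l*p : ℕ):ℝ) = ((n*q₂:ℕ):ℝ) - ((l*p:ℕ):ℝ) := by
    push_cast [Nat.cast_sub hl]; ring
  set M := min (((l*p:ℕ):ℝ)/q₁) ((((n*q₂:ℕ):ℝ) - ((l*p:ℕ):ℝ))/((q₂:ℝ)-q₁)) with hM
  have hUM : (U:ℝ) ≤ M := by
    rw [hM]
    refine le_min ?_ ?_
    · calc (U:ℝ) ≤ ((l*p/q₁ : ℕ):ℝ) := by exact_mod_cast min_le_left _ _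
      _ ≤ _ := d1.1
    · calc (U:ℝ) ≤ (((n*q₂-l*p)/(q₂-q₁) : ℕ):ℝ) := by exact_mod_cast min_le_right _ _
      _ ≤ ((n*q₂-l*p:ℕ):ℝ)/((q₂-q₁:ℕ):ℝ) := d2.1
      _ = _ := by rw [hsub, hbcast]
  have hMU : M ≤ (U:ℝ) + 1 := by
    rcases le_total (l*p/q₁ : ℕ) ((n*q₂-l*p)/(q₂-q₁)) with h | h
    · have hUeq : U = l*p/q₁ := min_eq_left h
      calc M ≤ ((l*p:ℕ):ℝ)/q₁ := min_le_left _ _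
      _ ≤ ((l*p/q₁:ℕ):ℝ) + 1 := d1.2
      _ = (U:ℝ) + 1 := by rw [hUeq]
    · have hUeq : U = (n*q₂-l*p)/(q₂-q₁) := min_eq_right h
      calc M ≤ (((n*q₂:ℕ):ℝ) - ((l*p:ℕ):ℝ))/((q₂:ℝ)-q₁) := min_le_right _ _
      _ = ((n*q₂-l*p:ℕ):ℝ)/((q₂-q₁:ℕ):ℝ) := by rw [hsub, hbcast]
      _ ≤ (((n*q₂-l*p)/(q₂-q₁):ℕ):ℝ) + 1 := d2.2
      _ = (U:ℝ) + 1 := by rw [hUeq]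
  have key : |(U:ℝ)/q₂ - M/q₂| ≤ 1/q₂ := by
    rw [div_sub_div_same, abs_div, abs_of_pos hq₂']
    gcongr
    rw [abs_le]; constructor <;> linarith
  have h2 : 1/(q₂:ℝ) ≤ 1 := by
    rw [div_le_one hq₂']; exact_mod_cast hq₂
  calc |(((Finset.range (U + 1)).filter fun r => r % q₂ = (l*p*q₁') % q₂).card : ℝ) - M/q₂|
      ≤ |(((Finset.range (U + 1)).filter fun r => r % q₂ = (l*p*q₁') % q₂).card : ℝ) - (U:ℝ)/q₂|
        + |(U:ℝ)/q₂ - M/q₂| := abs_sub_le _ _ _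
    _ ≤ 1 + 1/q₂ := add_le_add h1 key
    _ ≤ 2 := by linarith

lemma gauss_real (n : ℕ) : ∑ l ∈ Icc 1 n, (l:ℝ) = n*(n+1)/2 := by
  induction n with
  | zero => simp
  | succ n ih =>
    have hins : Icc 1 (n+1) = insert (n+1) (Icc 1 n) := by
      ext x; simp only [mem_Icc, mem_insert]; omega
    rw [hins, Finset.sum_insert (by simp only [mem_Icc]; omega), ih]
    push_cast; ring

lemma sum_rev_real (a b : ℕ) (c : ℝ) (hc : c = (a:ℝ) + b) :
    ∑ l ∈ Icc (a+1) (a+b), (c - (l:ℝ)) = b*(b-1)/2 := by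
  have h1 : ∑ l ∈ Icc (a+1) (a+b), (c - (l:ℝ)) = ∑ j ∈ range b, (j:ℝ) := by
    refine Finset.sum_nbij' (fun l => a + b - l) (fun j => a + b - j) ?_ ?_ ?_ ?_ ?_
    · intro x hx; simp only [mem_Icc] at hx; simp only [mem_range]; omega
    · intro x hx; simp only [mem_range] at hx; simp only [mem_Icc]; omega
    · intro x hx; simp only [mem_Icc] at hx
      show a + b - (a + b - x) = x; omega
    · intro x hx; simp only [mem_range] at hx
      show a + b - (a + b - x) = x; omega
    · intro x hx
      simp only [mem_Icc] at hx
      rw [hc]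
      have : ((a + b - x : ℕ):ℝ) = (a:ℝ) + b - x := by
        have : x ≤ a + b := hx.2
        push_cast [Nat.cast_sub this]; ring
      rw [this]
  rw [h1]
  clear h1 hc
  induction b with
  | zero => simp
  | succ m ih =>
    rw [Finset.sum_range_succ, ih]
    push_cast; ring

lemma identity_N (q₁ q₂ : ℕ) (hq₁ : 0 < q₁) (hq : q₁ < q₂) (p : ℕ) :
    ∑ l ∈ Icc 1 q₂, min ((l:ℝ)*p/q₁) (((q₂:ℝ) - l)*p/((q₂:ℝ)-q₁))
      = p*q₂/2 := by
  have hq₁' : (0:ℝ) < q₁ := by exact_mod_cast hq₁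
  have hq₂' : (0:ℝ) < q₂ := by exact_mod_cast (lt_trans hq₁ hq)
  have hb' : (0:ℝ) < (q₂:ℝ) - q₁ := by
    have : (q₁:ℝ) < q₂ := by exact_mod_cast hq
    linarith
  have hp' : (0:ℝ) ≤ p := Nat.cast_nonneg p
  have split : ∑ l ∈ Icc 1 q₂, min ((l:ℝ)*p/q₁) (((q₂:ℝ) - l)*p/((q₂:ℝ)-q₁))
      = ∑ l ∈ Icc 1 q₁, min ((l:ℝ)*p/q₁) (((q₂:ℝ) - l)*p/((q₂:ℝ)-q₁))
      + ∑ l ∈ Icc (q₁+1) q₂, min ((l:ℝ)*p/q₁) (((q₂:ℝ) - l)*p/((q₂:ℝ)-q₁)) := by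
    rw [← Finset.sum_union (by
      rw [Finset.disjoint_left]
      intro x hx hx'
      simp only [mem_Icc] at hx hx'
      omega)]
    apply Finset.sum_congr _ (fun _ _ => rfl)
    ext x
    simp only [mem_union, mem_Icc]
    omega
  rw [split]
  have S1 : ∑ l ∈ Icc 1 q₁, min ((l:ℝ)*p/q₁) (((q₂:ℝ) - l)*p/((q₂:ℝ)-q₁))
      = ∑ l ∈ Icc 1 q₁, (l:ℝ)*(p/q₁) := by
    refine Finset.sum_congr rfl ?_
    intro l hl
    simp only [mem_Icc] at hl
    have hl' : (l:ℝ) ≤ q₁ := by exact_mod_cast hl.2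
    rw [min_eq_left, mul_div_assoc]
    rw [div_le_div_iff₀ hq₁' hb']
    nlinarith [mul_nonneg (mul_nonneg hp' (le_of_lt hq₂')) (sub_nonneg.mpr hl')]
  have S2 : ∑ l ∈ Icc (q₁+1) q₂, min ((l:ℝ)*p/q₁) (((q₂:ℝ) - l)*p/((q₂:ℝ)-q₁))
      = ∑ l ∈ Icc (q₁+1) q₂, ((q₂:ℝ) - l)*(p/((q₂:ℝ)-q₁)) := by
    refine Finset.sum_congr rfl ?_
    intro l hl
    simp only [mem_Icc] at hl
    have hl' : (q₁:ℝ) ≤ l := by exact_mod_cast le_trans (Nat.le_succ q₁) hl.1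
    rw [min_eq_right, mul_div_assoc]
    rw [div_le_div_iff₀ hb' hq₁']
    nlinarith [mul_nonneg (mul_nonneg hp' (le_of_lt hq₂')) (sub_nonneg.mpr hl')]
  rw [S1, S2, ← Finset.sum_mul, ← Finset.sum_mul, gauss_real]
  have hrev : ∑ l ∈ Icc (q₁+1) q₂, ((q₂:ℝ) - (l:ℝ)) = ((q₂-q₁:ℕ):ℝ)*(((q₂-q₁:ℕ):ℝ)-1)/2 := by
    have h1 : Icc (q₁+1) q₂ = Icc (q₁+1) (q₁ + (q₂ - q₁)) := by congr 1; omega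
    rw [h1]
    refine sum_rev_real q₁ (q₂ - q₁) (q₂:ℝ) ?_
    push_cast [Nat.cast_sub (le_of_lt hq)]; ring
  rw [hrev]
  have hbc : ((q₂-q₁:ℕ):ℝ) = (q₂:ℝ) - q₁ := by
    push_cast [Nat.cast_sub (le_of_lt hq)]; ring
  rw [hbc]
  field_simp
  ring

lemma identity_E (q₁ q₂ : ℕ) (k j : ℕ) (hk : q₁ = 2*k+1) (hj : q₂ - q₁ = 2*j+1)
    (hq : q₁ < q₂) (p : ℕ) :
    ∑ l ∈ Icc 1 (k+j+1), min ((l:ℝ)*p/q₁) ((((k+j+1:ℕ):ℝ) - l)*p/((q₂:ℝ)-q₁))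
      = p*(q₂:ℝ)*((q₁:ℝ)*((q₂:ℝ)-q₁)-1)/(8*q₁*((q₂:ℝ)-q₁)) := by
  have hq₂ℕ : q₂ = 2*k+2*j+2 := by omega
  have hc₁ : (q₁:ℝ) = 2*k+1 := by exact_mod_cast congrArg (Nat.cast (R := ℝ)) hk
  have hc₂ : (q₂:ℝ) = 2*k+2*j+2 := by exact_mod_cast congrArg (Nat.cast (R := ℝ)) hq₂ℕ
  have hcb : (q₂:ℝ) - q₁ = 2*j+1 := by rw [hc₁, hc₂]; ring
  have hq₁' : (0:ℝ) < q₁ := by rw [hc₁]; positivity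
  have hb' : (0:ℝ) < (q₂:ℝ) - q₁ := by rw [hcb]; positivity
  have hp' : (0:ℝ) ≤ p := Nat.cast_nonneg p
  have split : ∑ l ∈ Icc 1 (k+j+1), min ((l:ℝ)*p/q₁) ((((k+j+1:ℕ):ℝ) - l)*p/((q₂:ℝ)-q₁))
      = ∑ l ∈ Icc 1 k, min ((l:ℝ)*p/q₁) ((((k+j+1:ℕ):ℝ) - l)*p/((q₂:ℝ)-q₁))
      + ∑ l ∈ Icc (k+1) (k+j+1), min ((l:ℝ)*p/q₁) ((((k+j+1:ℕ):ℝ) - l)*p/((q₂:ℝ)-q₁)) := by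
    rw [← Finset.sum_union (by
      rw [Finset.disjoint_left]
      intro x hx hx'
      simp only [mem_Icc] at hx hx'
      omega)]
    apply Finset.sum_congr _ (fun _ _ => rfl)
    ext x
    simp only [mem_union, mem_Icc]
    omega
  rw [split]
  have hch : ((k+j+1:ℕ):ℝ) = (k:ℝ)+j+1 := by push_cast; ring
  have S1 : ∑ l ∈ Icc 1 k, min ((l:ℝ)*p/q₁) ((((k+j+1:ℕ):ℝ) - l)*p/((q₂:ℝ)-q₁))
      = ∑ l ∈ Icc 1 k, (l:ℝ)*(p/q₁) := by
    refine Finset.sum_congr rfl ?_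
    intro l hl
    simp only [mem_Icc] at hl
    have hl' : (l:ℝ) ≤ k := by exact_mod_cast hl.2
    rw [min_eq_left, mul_div_assoc]
    rw [div_le_div_iff₀ hq₁' hb']
    rw [hch, hcb, hc₁]
    nlinarith [mul_nonneg (mul_nonneg hp' (show (0:ℝ) ≤ 2*k+2*j+2 by positivity))
        (sub_nonneg.mpr hl'), mul_nonneg hp' (show (0:ℝ) ≤ (k:ℝ)+j+1 by positivity)]
  have S2 : ∑ l ∈ Icc (k+1) (k+j+1), min ((l:ℝ)*p/q₁) ((((k+j+1:ℕ):ℝ) - l)*p/((q₂:ℝ)-q₁))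
      = ∑ l ∈ Icc (k+1) (k+j+1), (((k+j+1:ℕ):ℝ) - l)*(p/((q₂:ℝ)-q₁)) := by
    refine Finset.sum_congr rfl ?_
    intro l hl
    simp only [mem_Icc] at hl
    have hl' : (k:ℝ)+1 ≤ l := by exact_mod_cast hl.1
    rw [min_eq_right, mul_div_assoc]
    rw [div_le_div_iff₀ hb' hq₁']
    rw [hch, hcb, hc₁]
    nlinarith [mul_nonneg (mul_nonneg hp' (show (0:ℝ) ≤ 2*k+2*j+2 by positivity))
        (sub_nonneg.mpr (by linarith : (k:ℝ) ≤ l)), mul_nonneg hp' (show (0:ℝ) ≤ (k:ℝ)+j+1 by positivity)]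
  rw [S1, S2, ← Finset.sum_mul, ← Finset.sum_mul, gauss_real]
  have hrev : ∑ l ∈ Icc (k+1) (k+j+1), (((k+j+1:ℕ):ℝ) - (l:ℝ))
      = ((j+1:ℕ):ℝ)*(((j+1:ℕ):ℝ)-1)/2 := by
    have h1 : Icc (k+1) (k+j+1) = Icc (k+1) (k + (j+1)) := by congr 1
    rw [h1]
    refine sum_rev_real k (j+1) ((k+j+1:ℕ):ℝ) ?_
    push_cast; ring
  rw [hrev, hcb, hc₁, hc₂]
  push_cast
  have h2k : (0:ℝ) < 2*(k:ℝ)+1 := by positivity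
  have h2j : (0:ℝ) < 2*(j:ℝ)+1 := by positivity
  field_simp
  ring

lemma min_lip (x y y' : ℝ) : |min x y - min x y'| ≤ |y - y'| := by
  rcases le_total x y with h1 | h1 <;> rcases le_total x y' with h2 | h2
  · rw [min_eq_left h1, min_eq_left h2]
    simp
  · rw [min_eq_left h1, min_eq_right h2, abs_le]
    constructor <;> linarith [le_abs_self (y - y'), neg_abs_le (y - y'), abs_nonneg (y - y')]
  · rw [min_eq_right h1, min_eq_left h2, abs_le]
    constructor <;> linarith [le_abs_self (y - y'), neg_abs_le (y - y'), abs_nonneg (y - y')]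
  · rw [min_eq_right h1, min_eq_right h2]

lemma N_bound (q₁ q₂ : ℕ) (hq₁ : 0 < q₁) (hq : q₁ < q₂) (q₁' : ℕ)
    (hinv : q₁ * q₁' % q₂ = 1 % q₂) (p : ℕ) (hp : 0 < p) :
    |((Tset q₁ q₂ p p).card : ℝ) - p/2| ≤ 2*q₂ := by
  have hq₂ : 0 < q₂ := lt_trans hq₁ hq
  have hq₂' : (0:ℝ) < q₂ := by exact_mod_cast hq₂
  rw [Tset_card_eq_sum q₁ q₂ (le_of_lt hq) p p hp le_rfl]
  set w : ℕ → ℝ := fun l => min ((l:ℝ)*p/q₁) (((q₂:ℝ)-l)*p/((q₂:ℝ)-q₁)) / q₂ with hw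
  have hsumw : ∑ l ∈ Icc 1 q₂, w l = (p:ℝ)/2 := by
    rw [hw, ← Finset.sum_div, identity_N q₁ q₂ hq₁ hq p]
    field_simp
  have hterm : ∀ l ∈ Icc 1 q₂, |((lineSet q₁ q₂ p p l).card:ℝ) - w l| ≤ 2 := by
    intro l hl
    simp only [mem_Icc] at hl
    have hlp : l*p ≤ p*q₂ := by
      calc l*p ≤ q₂*p := Nat.mul_le_mul_right p hl.2
      _ = p*q₂ := Nat.mul_comm _ _
    have hb := line_bound q₁ q₂ hq₁ hq q₁' hinv p p l hlp
    have e1 : ((l*p:ℕ):ℝ)/q₁ = (l:ℝ)*p/q₁ := by push_cast; ring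
    have e2 : (((p*q₂:ℕ):ℝ) - ((l*p:ℕ):ℝ))/((q₂:ℝ)-q₁) = ((q₂:ℝ)-l)*p/((q₂:ℝ)-q₁) := by
      push_cast; ring
    rw [e1, e2] at hb
    exact hb
  calc |((∑ l ∈ Icc 1 q₂, (lineSet q₁ q₂ p p l).card : ℕ):ℝ) - (p:ℝ)/2|
      = |∑ l ∈ Icc 1 q₂, (((lineSet q₁ q₂ p p l).card:ℝ) - w l)| := by
        rw [Finset.sum_sub_distrib, hsumw]
        push_cast
        ring_nf
    _ ≤ ∑ l ∈ Icc 1 q₂, |((lineSet q₁ q₂ p p l).card:ℝ) - w l| :=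
        Finset.abs_sum_le_sum_abs _ _
    _ ≤ ∑ l ∈ Icc 1 q₂, (2:ℝ) := Finset.sum_le_sum hterm
    _ = (q₂:ℝ) * 2 := by
        rw [Finset.sum_const, Nat.card_Icc]
        simp
    _ ≤ 2*q₂ := by linarith

set_option maxHeartbeats 2000000 in
lemma E_bound (q₁ q₂ k j : ℕ) (hq₁ : 0 < q₁) (hq : q₁ < q₂)
    (hk : q₁ = 2*k+1) (hj : q₂ - q₁ = 2*j+1) (q₁' : ℕ)
    (hinv : q₁ * q₁' % q₂ = 1 % q₂) (p : ℕ) (hp : 0 < p) :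
    |((Tset q₁ q₂ p (p/2)).card : ℝ)
      - (p:ℝ)*((q₁:ℝ)*((q₂:ℝ)-q₁)-1)/(8*q₁*((q₂:ℝ)-q₁))| ≤ 3*q₂ := by
  have hq₂ℕ : q₂ = 2*k+2*j+2 := by omega
  set t := k+j+1 with ht
  have hq₂ : 0 < q₂ := lt_trans hq₁ hq
  have hq₂' : (0:ℝ) < q₂ := by exact_mod_cast hq₂
  have hq₁' : (0:ℝ) < q₁ := by exact_mod_cast hq₁
  have hb' : (0:ℝ) < (q₂:ℝ) - q₁ := by
    have : (q₁:ℝ) < q₂ := by exact_mod_cast hq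
    linarith
  have hb1 : (1:ℝ) ≤ (q₂:ℝ) - q₁ := by
    have h1 : (q₁:ℝ) + 1 ≤ q₂ := by exact_mod_cast hq
    linarith
  have htq : t ≤ q₂ := by omega
  have ht' : (0:ℝ) ≤ (t:ℝ) := Nat.cast_nonneg t
  have htq' : (t:ℝ) ≤ q₂ := by exact_mod_cast htq
  have hq2t : q₂ = 2*t := by omega
  have hdiv : 2*(p/2) ≤ p ∧ p ≤ 2*(p/2)+1 := by omega
  have hD1 : (p/2)*q₂ ≤ p*t := by
    rw [hq2t]
    calc (p/2)*(2*t) = 2*(p/2)*t := by ring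
    _ ≤ p*t := Nat.mul_le_mul_right t hdiv.1
  have hD2 : p*t ≤ (p/2)*q₂ + t := by
    rw [hq2t]
    calc p*t ≤ (2*(p/2)+1)*t := Nat.mul_le_mul_right t hdiv.2
    _ = (p/2)*(2*t) + t := by ring
  have hn : p/2 ≤ p := Nat.div_le_self p 2
  rw [Tset_card_eq_sum q₁ q₂ (le_of_lt hq) p (p/2) hp hn]
  have hzero : ∀ l ∈ Icc 1 q₂, l ∉ Icc 1 t → (lineSet q₁ q₂ p (p/2) l).card = 0 := by
    intro l hl hlt
    simp only [mem_Icc] at hl hlt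
    have hlt' : t + 1 ≤ l := by omega
    have h2 : 2*(p/2)*t ≤ p*t := Nat.mul_le_mul_right t hdiv.1
    have h3 : p*t < p*(t+1) := by
      have : 0 < p := hp
      calc p*t < p*t + p := by omega
      _ = p*(t+1) := by ring
    have h4 : p*(t+1) ≤ p*l := Nat.mul_le_mul_left p hlt'
    have hlp : (p/2)*q₂ < l*p := by
      rw [hq2t, Nat.mul_comm l p]
      calc (p/2)*(2*t) = 2*(p/2)*t := by ring
      _ ≤ p*t := h2
      _ < p*l := lt_of_lt_of_le h3 h4
    rw [lineSet_empty q₁ q₂ p (p/2) l (le_of_lt hq) hlp, Finset.card_empty]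
  rw [← Finset.sum_subset (Finset.Icc_subset_Icc_right htq) hzero]
  set w : ℕ → ℝ := fun l => min ((l:ℝ)*p/q₁) ((((t:ℕ):ℝ)-(l:ℝ))*p/((q₂:ℝ)-q₁)) / q₂ with hw
  have hsumw : ∑ l ∈ Icc 1 t, w l
      = (p:ℝ)*((q₁:ℝ)*((q₂:ℝ)-q₁)-1)/(8*q₁*((q₂:ℝ)-q₁)) := by
    rw [hw, ← Finset.sum_div, identity_E q₁ q₂ k j hk hj hq p]
    field_simp
  have hterm : ∀ l ∈ Icc 1 t, |((lineSet q₁ q₂ p (p/2) l).card:ℝ) - w l| ≤ 3 := by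
    intro l hl
    simp only [mem_Icc] at hl
    have hlt : l ≤ t := hl.2
    have hlt' : (l:ℝ) ≤ t := by exact_mod_cast hlt
    have hD1' : (((p/2)*q₂:ℕ):ℝ) ≤ (p:ℝ)*t := by exact_mod_cast hD1
    have hD2' : (p:ℝ)*t ≤ (((p/2)*q₂:ℕ):ℝ) + t := by exact_mod_cast hD2
    rcases le_or_gt (l*p) ((p/2)*q₂) with hcase | hcase
    · have hlb := line_bound q₁ q₂ hq₁ hq q₁' hinv p (p/2) l hcase
      have e1 : ((l*p:ℕ):ℝ)/q₁ = (l:ℝ)*p/q₁ := by push_cast; ring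
      rw [e1] at hlb
      have hMdiff : |min ((l:ℝ)*p/q₁) (((((p/2)*q₂:ℕ):ℝ) - ((l*p:ℕ):ℝ))/((q₂:ℝ)-q₁))/q₂
          - w l| ≤ 1 := by
        rw [hw]
        simp only
        rw [div_sub_div_same, abs_div, abs_of_pos hq₂']
        have hlip := min_lip ((l:ℝ)*p/q₁)
          (((((p/2)*q₂:ℕ):ℝ) - ((l*p:ℕ):ℝ))/((q₂:ℝ)-q₁))
          ((((t:ℕ):ℝ)-(l:ℝ))*p/((q₂:ℝ)-q₁))
        have hyy : |((((p/2)*q₂:ℕ):ℝ) - ((l*p:ℕ):ℝ))/((q₂:ℝ)-q₁)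
            - (((t:ℕ):ℝ)-(l:ℝ))*p/((q₂:ℝ)-q₁)| ≤ (t:ℝ)/((q₂:ℝ)-q₁) := by
          rw [div_sub_div_same, abs_div, abs_of_pos hb']
          gcongr
          have e2 : ((((p/2)*q₂:ℕ):ℝ) - ((l*p:ℕ):ℝ)) - (((t:ℕ):ℝ)-(l:ℝ))*p
              = (((p/2)*q₂:ℕ):ℝ) - (p:ℝ)*t := by push_cast; ring
          rw [e2, abs_le]
          constructor <;> linarith
        have hfrac : ((t:ℝ)/((q₂:ℝ)-q₁))/q₂ ≤ 1 := by
          rw [div_le_one hq₂', div_le_iff₀ hb']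
          nlinarith
        calc |min ((l:ℝ)*p/q₁) (((((p/2)*q₂:ℕ):ℝ) - ((l*p:ℕ):ℝ))/((q₂:ℝ)-q₁))
            - min ((l:ℝ)*p/q₁) ((((t:ℕ):ℝ)-(l:ℝ))*p/((q₂:ℝ)-q₁))| / q₂
            ≤ ((t:ℝ)/((q₂:ℝ)-q₁))/q₂ :=
              (div_le_div_iff_of_pos_right hq₂').mpr (le_trans hlip hyy)
          _ ≤ 1 := hfrac
      calc |((lineSet q₁ q₂ p (p/2) l).card:ℝ) - w l|
          ≤ |((lineSet q₁ q₂ p (p/2) l).card:ℝ)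
              - min ((l:ℝ)*p/q₁) (((((p/2)*q₂:ℕ):ℝ) - ((l*p:ℕ):ℝ))/((q₂:ℝ)-q₁))/q₂|
            + |min ((l:ℝ)*p/q₁) (((((p/2)*q₂:ℕ):ℝ) - ((l*p:ℕ):ℝ))/((q₂:ℝ)-q₁))/q₂
              - w l| := abs_sub_le _ _ _
        _ ≤ 2 + 1 := add_le_add hlb hMdiff
        _ = 3 := by norm_num
    · rw [lineSet_empty q₁ q₂ p (p/2) l (le_of_lt hq) hcase, Finset.card_empty]
      have hcase' : (((p/2)*q₂:ℕ):ℝ) ≤ (l:ℝ)*p := by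
        have : ((p/2)*q₂:ℕ) ≤ l*p := le_of_lt hcase
        exact_mod_cast this
      have hw0 : 0 ≤ w l := by
        rw [hw]
        simp only
        apply div_nonneg _ (le_of_lt hq₂')
        apply le_min
        · positivity
        · apply div_nonneg _ (le_of_lt hb')
          apply mul_nonneg _ (Nat.cast_nonneg p)
          have : ((t:ℕ):ℝ) = (t:ℝ) := rfl
          linarith
      have hw1 : w l ≤ 1 := by
        rw [hw]
        simp only
        rw [div_le_one hq₂']
        calc min ((l:ℝ)*p/q₁) ((((t:ℕ):ℝ)-(l:ℝ))*p/((q₂:ℝ)-q₁))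
            ≤ (((t:ℕ):ℝ)-(l:ℝ))*p/((q₂:ℝ)-q₁) := min_le_right _ _
          _ ≤ (t:ℝ)/((q₂:ℝ)-q₁) := by
              have hnum : (((t:ℕ):ℝ)-(l:ℝ))*p ≤ (t:ℝ) := by nlinarith
              exact (div_le_div_iff_of_pos_right hb').mpr hnum
          _ ≤ q₂ := by
              rw [div_le_iff₀ hb']
              nlinarith
      rw [Nat.cast_zero, zero_sub, abs_neg, abs_of_nonneg hw0]
      linarith
  calc |((∑ l ∈ Icc 1 t, (lineSet q₁ q₂ p (p/2) l).card : ℕ):ℝ)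
        - (p:ℝ)*((q₁:ℝ)*((q₂:ℝ)-q₁)-1)/(8*q₁*((q₂:ℝ)-q₁))|
      = |∑ l ∈ Icc 1 t, (((lineSet q₁ q₂ p (p/2) l).card:ℝ) - w l)| := by
        rw [Finset.sum_sub_distrib, hsumw]
        push_cast
        ring_nf
    _ ≤ ∑ l ∈ Icc 1 t, |((lineSet q₁ q₂ p (p/2) l).card:ℝ) - w l| :=
        Finset.abs_sum_le_sum_abs _ _
    _ ≤ ∑ l ∈ Icc 1 t, (3:ℝ) := Finset.sum_le_sum hterm
    _ = (t:ℝ) * 3 := by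
        rw [Finset.sum_const, Nat.card_Icc]
        simp
    _ ≤ 3*q₂ := by linarith

lemma Npos_rel (q₁ q₂ : ℕ) (hq₁ : 0 < q₁) (hq : q₁ < q₂) (p : ℕ) (hp : 0 < p) :
    ((Finset.range (p + 1) ×ˢ Finset.range (p + 1)).filter fun rs =>
        rs.1 + rs.2 ≤ p ∧ 0 < rs.1 * q₁ + rs.2 * q₂ ∧ p ∣ rs.1 * q₁ + rs.2 * q₂ ∧
          Odd (Nat.gcd rs.1 (Nat.gcd rs.2 ((rs.1 * q₁ + rs.2 * q₂) / p)))).card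
      + (Tset q₁ q₂ p (p/2)).card = (Tset q₁ q₂ p p).card := by
  classical
  have h1 : ((Finset.range (p + 1) ×ˢ Finset.range (p + 1)).filter fun rs =>
        rs.1 + rs.2 ≤ p ∧ 0 < rs.1 * q₁ + rs.2 * q₂ ∧ p ∣ rs.1 * q₁ + rs.2 * q₂ ∧
          Odd (Nat.gcd rs.1 (Nat.gcd rs.2 ((rs.1 * q₁ + rs.2 * q₂) / p))))
      = (Tset q₁ q₂ p p).filter (fun rs =>
          Odd (Nat.gcd rs.1 (Nat.gcd rs.2 ((rs.1 * q₁ + rs.2 * q₂) / p)))) := by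
    ext rs
    simp only [Tset, mem_filter, mem_product, mem_range]
    tauto
  rw [h1, ← Finset.card_filter_add_card_filter_not (s := Tset q₁ q₂ p p)
    (p := fun rs => Odd (Nat.gcd rs.1 (Nat.gcd rs.2 ((rs.1 * q₁ + rs.2 * q₂) / p))))]
  congr 1
  refine Finset.card_bij' (fun rs _ => (2*rs.1, 2*rs.2)) (fun rs _ => (rs.1/2, rs.2/2))
    ?_ ?_ ?_ ?_
  · -- double : Tset p (p/2) → filter ¬Odd
    rintro ⟨r, s⟩ hm
    simp only [Tset, mem_filter, mem_product, mem_range, Nat.lt_succ_iff] at hm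
    obtain ⟨⟨hr, hs⟩, hsum, hpos, hdvd⟩ := hm
    obtain ⟨l', hl'⟩ := hdvd
    have h2p : 2*(p/2) ≤ p := by omega
    have hxx : (2*r) * q₁ + (2*s) * q₂ = 2*(r * q₁ + s * q₂) := by ring
    simp only [Tset, mem_filter, mem_product, mem_range, Nat.lt_succ_iff]
    refine ⟨⟨⟨by omega, by omega⟩, by omega, ?_, ?_⟩, ?_⟩
    · rw [hxx]; omega
    · rw [hxx, hl']
      exact ⟨2*l', by ring⟩
    · rw [hxx, hl']
      have hdiv : (2*(p*l'))/p = 2*l' := by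
        rw [show 2*(p*l') = p*(2*l') by ring]
        exact Nat.mul_div_cancel_left _ hp
      rw [hdiv]
      have h2g : 2 ∣ Nat.gcd (2*r) (Nat.gcd (2*s) (2*l')) :=
        Nat.dvd_gcd ⟨r, rfl⟩ (Nat.dvd_gcd ⟨s, rfl⟩ ⟨l', rfl⟩)
      rw [Nat.odd_iff]
      omega
  · -- halve : filter ¬Odd → Tset p (p/2)
    rintro ⟨r, s⟩ hm
    simp only [Tset, mem_filter, mem_product, mem_range, Nat.lt_succ_iff] at hm
    have hodd := hm.2
    obtain ⟨⟨hr, hs⟩, hsum, hpos, hdvd⟩ := hm.1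
    have hg2 : 2 ∣ Nat.gcd r (Nat.gcd s ((r * q₁ + s * q₂) / p)) := by
      rcases Nat.even_or_odd (Nat.gcd r (Nat.gcd s ((r * q₁ + s * q₂) / p))) with h | h
      · exact h.two_dvd
      · exact absurd h hodd
    have h2r : 2 ∣ r := dvd_trans hg2 (Nat.gcd_dvd_left _ _)
    have h2s : 2 ∣ s := dvd_trans (dvd_trans hg2 (Nat.gcd_dvd_right _ _)) (Nat.gcd_dvd_left _ _)
    have h2l : 2 ∣ ((r * q₁ + s * q₂) / p) :=
      dvd_trans (dvd_trans hg2 (Nat.gcd_dvd_right _ _)) (Nat.gcd_dvd_right _ _)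
    obtain ⟨l, hl⟩ := hdvd
    have hldiv : (r * q₁ + s * q₂) / p = l := by rw [hl]; exact Nat.mul_div_cancel_left _ hp
    obtain ⟨l', hl2⟩ : 2 ∣ l := by rw [hldiv] at h2l; exact h2l
    obtain ⟨r', hr2⟩ := h2r
    obtain ⟨s', hs2⟩ := h2s
    have hx' : r' * q₁ + s' * q₂ = p * l' := by
      have : 2*(r' * q₁ + s' * q₂) = 2*(p * l') := by
        calc 2*(r' * q₁ + s' * q₂) = (2*r') * q₁ + (2*s') * q₂ := by ring
        _ = r * q₁ + s * q₂ := by rw [← hr2, ← hs2]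
        _ = p * (2*l') := by rw [hl, hl2]
        _ = 2*(p*l') := by ring
      omega
    simp only [Tset, mem_filter, mem_product, mem_range, Nat.lt_succ_iff]
    have hre : r/2 = r' := by omega
    have hse : s/2 = s' := by omega
    rw [hre, hse]
    refine ⟨⟨by omega, by omega⟩, by omega, ?_, ⟨l', hx'⟩⟩
    have : 0 < r' * q₁ + s' * q₂ ∨ (r' = 0 ∧ s' = 0) := by
      rcases Nat.eq_zero_or_pos (r' * q₁ + s' * q₂) with h | h
      · right
        constructor
        · by_contra h0
          have : 0 < r' * q₁ := Nat.mul_pos (by omega) hq₁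
          omega
        · by_contra h0
          have : 0 < s' * q₂ := Nat.mul_pos (by omega) (lt_trans hq₁ hq)
          omega
      · left; exact h
    rcases this with h | ⟨h0, h1⟩
    · exact h
    · exfalso
      rw [hr2, hs2, h0, h1] at hpos
      simp at hpos
  · -- j ∘ i = id on Tset (p/2)
    rintro ⟨r, s⟩ _
    simp only [Prod.mk.injEq]
    omega
  · -- i ∘ j = id on filter
    rintro ⟨r, s⟩ hm
    simp only [Tset, mem_filter, mem_product, mem_range, Nat.lt_succ_iff] at hm
    have hodd := hm.2
    obtain ⟨⟨hr, hs⟩, hsum, hpos, hdvd⟩ := hm.1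
    have hg2 : 2 ∣ Nat.gcd r (Nat.gcd s ((r * q₁ + s * q₂) / p)) := by
      rcases Nat.even_or_odd (Nat.gcd r (Nat.gcd s ((r * q₁ + s * q₂) / p))) with h | h
      · exact h.two_dvd
      · exact absurd h hodd
    have h2r : 2 ∣ r := dvd_trans hg2 (Nat.gcd_dvd_left _ _)
    have h2s : 2 ∣ s := dvd_trans (dvd_trans hg2 (Nat.gcd_dvd_right _ _)) (Nat.gcd_dvd_left _ _)
    simp only [Prod.mk.injEq]
    omega

theorem stmt_18 (q₁ q₂ : ℕ) (h₁ : 0 < q₁) (h₁₂ : q₁ < q₂)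
    (hcop : Nat.Coprime q₁ q₂) (hodd₁ : Odd q₁) (heven₂ : Even q₂)
    (Npos N : ℕ → ℕ)
    (hNpos : ∀ p, Npos p =
      ((Finset.range (p + 1) ×ˢ Finset.range (p + 1)).filter fun rs =>
        rs.1 + rs.2 ≤ p ∧ 0 < rs.1 * q₁ + rs.2 * q₂ ∧ p ∣ rs.1 * q₁ + rs.2 * q₂ ∧
          Odd (Nat.gcd rs.1 (Nat.gcd rs.2 ((rs.1 * q₁ + rs.2 * q₂) / p)))).card)
    (hN : ∀ p, N p =
      ((Finset.range (p + 1) ×ˢ Finset.range (p + 1)).filter fun rs =>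
        rs.1 + rs.2 ≤ p ∧ 0 < rs.1 * q₁ + rs.2 * q₂ ∧
          p ∣ rs.1 * q₁ + rs.2 * q₂).card) :
    Tendsto (fun p : ℕ => (Npos p : ℝ) / (N p : ℝ)) atTop
      (nhds ((3 * q₁ * ((q₂ : ℝ) - q₁) + 1) / (4 * q₁ * ((q₂ : ℝ) - q₁)))) := by
  classical
  have hq₂ : 0 < q₂ := lt_trans h₁ h₁₂
  have hq₂1 : 1 < q₂ := by omega
  obtain ⟨q₁', -, hinv'⟩ := Nat.exists_mul_mod_eq_one_of_coprime hcop hq₂1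
  have hinv : q₁ * q₁' % q₂ = 1 % q₂ := by rw [hinv', Nat.mod_eq_of_lt hq₂1]
  obtain ⟨k, hk⟩ := hodd₁
  obtain ⟨m2, hm2⟩ := heven₂
  obtain ⟨j, hj⟩ : ∃ j, q₂ - q₁ = 2*j+1 := ⟨(q₂-q₁-1)/2, by omega⟩
  have hA : (0:ℝ) < q₁ := by exact_mod_cast h₁
  have hB : (0:ℝ) < (q₂:ℝ) - q₁ := by
    have : (q₁:ℝ) < q₂ := by exact_mod_cast h₁₂
    linarith
  have hq₂' : (0:ℝ) < q₂ := by exact_mod_cast hq₂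
  have hNcard : ∀ p, N p = (Tset q₁ q₂ p p).card := fun p => hN p
  set e2 : ℝ := ((q₁:ℝ)*((q₂:ℝ)-q₁)-1)/(8*q₁*((q₂:ℝ)-q₁)) with he2
  -- Tendsto N p / p → 1/2
  have t1 : Tendsto (fun p : ℕ => (N p:ℝ)/p) atTop (nhds (1/2)) := by
    have h0 : Tendsto (fun p : ℕ => (N p:ℝ)/p - 1/2) atTop (nhds 0) := by
      apply squeeze_zero_norm' (a := fun p : ℕ => (2*q₂:ℝ)/p)
      · filter_upwards [eventually_ge_atTop 1] with p hp
        have hp' : (0:ℝ) < p := by exact_mod_cast hp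
        have hb := N_bound q₁ q₂ h₁ h₁₂ q₁' hinv p hp
        rw [← hNcard p] at hb
        rw [Real.norm_eq_abs,
          show (N p:ℝ)/p - 1/2 = ((N p:ℝ) - (p:ℝ)/2)/p by field_simp,
          abs_div, abs_of_pos hp']
        gcongr
      · exact tendsto_const_div_atTop_nhds_zero_nat (2*(q₂:ℝ))
    have := h0.add (tendsto_const_nhds (x := (1/2:ℝ)))
    simp only [zero_add] at this
    exact this.congr (fun p => by ring)
  -- Tendsto E p / p → e2
  have t2 : Tendsto (fun p : ℕ => ((Tset q₁ q₂ p (p/2)).card:ℝ)/p) atTop (nhds e2) := by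
    have h0 : Tendsto (fun p : ℕ => ((Tset q₁ q₂ p (p/2)).card:ℝ)/p - e2) atTop (nhds 0) := by
      apply squeeze_zero_norm' (a := fun p : ℕ => (3*q₂:ℝ)/p)
      · filter_upwards [eventually_ge_atTop 1] with p hp
        have hp' : (0:ℝ) < p := by exact_mod_cast hp
        have hb := E_bound q₁ q₂ k j h₁ h₁₂ (by omega) hj q₁' hinv p hp
        rw [Real.norm_eq_abs,
          show ((Tset q₁ q₂ p (p/2)).card:ℝ)/p - e2
            = (((Tset q₁ q₂ p (p/2)).card:ℝ) - (p:ℝ)*((q₁:ℝ)*((q₂:ℝ)-q₁)-1)/(8*q₁*((q₂:ℝ)-q₁)))/p by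
              rw [he2]; field_simp,
          abs_div, abs_of_pos hp']
        gcongr
      · exact tendsto_const_div_atTop_nhds_zero_nat (3*(q₂:ℝ))
    have := h0.add (tendsto_const_nhds (x := e2))
    simp only [zero_add] at this
    exact this.congr (fun p => by ring)
  -- combined limit
  have t3 : Tendsto (fun p : ℕ => 1 - (((Tset q₁ q₂ p (p/2)).card:ℝ)/p)/((N p:ℝ)/p)) atTop
      (nhds (1 - e2/(1/2))) := by
    exact (tendsto_const_nhds (x := (1:ℝ))).sub (t2.div t1 (by norm_num))
  have hval : 1 - e2/(1/2) = (3 * q₁ * ((q₂ : ℝ) - q₁) + 1) / (4 * q₁ * ((q₂ : ℝ) - q₁)) := by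
    rw [he2]
    field_simp
    ring
  rw [← hval]
  apply t3.congr'
  filter_upwards [eventually_ge_atTop (4*q₂+1)] with p hp
  have hp1 : 0 < p := by omega
  have hp' : (0:ℝ) < p := by exact_mod_cast hp1
  have hNb := N_bound q₁ q₂ h₁ h₁₂ q₁' hinv p hp1
  rw [← hNcard p] at hNb
  have hplarge : (4*q₂+1:ℝ) ≤ p := by exact_mod_cast hp
  have hNpos' : (0:ℝ) < N p := by
    have h1' : (N p:ℝ) ≥ (p:ℝ)/2 - 2*q₂ := by
      have := abs_le.mp hNb
      linarith [this.1]
    have : (p:ℝ)/2 - 2*q₂ > 0 := by linarith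
    linarith
  have hrel := Npos_rel q₁ q₂ h₁ h₁₂ p hp1
  have hrelR : (Npos p:ℝ) + ((Tset q₁ q₂ p (p/2)).card:ℝ) = (N p:ℝ) := by
    rw [hNpos p, hNcard p]
    exact_mod_cast hrel
  have hNne : (N p:ℝ) ≠ 0 := ne_of_gt hNpos'
  have hpne : (p:ℝ) ≠ 0 := ne_of_gt hp'
  field_simp
  linarith [hrelR]
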